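/- Let n ≥ 2, α ≥ 0, β > 0, γ ∈ ℝ, and let f = (f¹,…,fⁿ) : [0,∞) → ℝⁿ be a continuous function with 0 ≤ f¹_t ≤ … ≤ fⁿ_t for all t ≥ 0 and such that 0 ≤ f¹_t < f²_t < … < fⁿ_t for Lebesgue-almost every t ≥ 0. Assume that for every i ∈ {1,…,n} and every t ≥ 0, ∫₀ᵗ | α − 2γ f^i_s + β ∑_{j≠i} (f^i_s + f^j_s)/(f^i_s − f^j_s) | ds < ∞. Then for all indices 1 ≤ l < i ≤ n and all t ≥ 0, ∫₀ᵗ f^i_s / (f^i_s − f^l_s) ds < ∞. -/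

import Mathlib

open MeasureTheory Finset

lemma aux_split {n : ℕ} (i : Fin n) (g : Fin n → ℝ) :
    ∑ j ∈ Finset.univ.erase i, g j =
      ∑ j ∈ Finset.univ.filter (fun j => j < i), g j
      + ∑ j ∈ Finset.univ.filter (fun j => i < j), g j := by
  rw [← Finset.sum_filter_add_sum_filter_not (Finset.univ.erase i) (fun j => j < i)]
  congr 1
  · apply Finset.sum_congr _ fun _ _ => rfl
    ext j
    simp only [Finset.mem_filter, Finset.mem_erase, Finset.mem_univ, true_and, and_true]
    exact ⟨fun h => h.2, fun h => ⟨ne_of_lt h, h⟩⟩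
  · apply Finset.sum_congr _ fun _ _ => rfl
    ext j
    simp only [Finset.mem_filter, Finset.mem_erase, Finset.mem_univ, true_and, and_true]
    exact ⟨fun h => lt_of_le_of_ne (not_lt.1 h.2) (Ne.symm h.1),
      fun h => ⟨(ne_of_lt h).symm, not_lt.2 h.le⟩⟩

lemma aux_ineq {n : ℕ} (i l : Fin n) (hli : l < i) {α β γ : ℝ} (hα : 0 ≤ α) (hβ : 0 < β)
    (a : Fin n → ℝ) (hnn : ∀ j, 0 ≤ a j) (hsm : StrictMono a) :
    a i / (a i - a l) ≤
      |α - 2*γ*(a i) + β * ∑ j ∈ Finset.univ.erase i, (a i + a j) / (a i - a j)| / β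
      + (α + 2 * |γ| * (a i)) / β
      + ∑ j ∈ Finset.univ.filter (fun j => i < j), 2*(a j / (a j - a i)) := by
  set Sm := ∑ j ∈ Finset.univ.filter (fun j => j < i), (a i + a j) / (a i - a j) with hSm
  set Sp := ∑ j ∈ Finset.univ.filter (fun j => i < j), (a i + a j) / (a i - a j) with hSp
  set T := ∑ j ∈ Finset.univ.filter (fun j => i < j), 2*(a j / (a j - a i)) with hT
  have hsplit : ∑ j ∈ Finset.univ.erase i, (a i + a j) / (a i - a j) = Sm + Sp :=
    aux_split i _
  -- first step : a i / (a i - a l) ≤ Sm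
  have h1 : a i / (a i - a l) ≤ Sm := by
    have hd : 0 < a i - a l := sub_pos.2 (hsm hli)
    have hterm : a i / (a i - a l) ≤ (a i + a l) / (a i - a l) := by
      apply div_le_div_of_nonneg_right _ hd.le
      linarith [hnn l]
    refine hterm.trans ?_
    rw [hSm]
    refine Finset.single_le_sum (f := fun j => (a i + a j) / (a i - a j))
      (fun j hj => ?_) (Finset.mem_filter.2 ⟨Finset.mem_univ l, hli⟩)
    have hji : j < i := (Finset.mem_filter.1 hj).2
    exact div_nonneg (by linarith [hnn i, hnn j]) (le_of_lt (sub_pos.2 (hsm hji)))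
  -- bound on the negative part
  have h2 : -Sp ≤ T := by
    have : -Sp = ∑ j ∈ Finset.univ.filter (fun j => i < j), (a i + a j) / (a j - a i) := by
      rw [hSp, ← Finset.sum_neg_distrib]
      apply Finset.sum_congr rfl
      intro j hj
      rw [show a j - a i = -(a i - a j) by ring, div_neg]
    rw [this, hT]
    apply Finset.sum_le_sum
    intro j hj
    have hij : i < j := (Finset.mem_filter.1 hj).2
    have hd : 0 < a j - a i := sub_pos.2 (hsm hij)
    rw [mul_div_assoc'] -- 2*(a j / d) = (2 * a j) / d
    apply div_le_div_of_nonneg_right _ hd.le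
    linarith [(hsm hij).le]
  have habs := le_abs_self (α - 2*γ*(a i) + β * (Sm + Sp))
  have hγfact : 2*γ*(a i) ≤ 2 * |γ| * (a i) :=
    mul_le_mul_of_nonneg_right (by linarith [le_abs_self γ]) (hnn i)
  have hsp : β * (-Sp) ≤ β * T := mul_le_mul_of_nonneg_left h2 hβ.le
  rw [hsplit]
  have h3 : β * Sm ≤ |α - 2*γ*(a i) + β * (Sm + Sp)| + (α + 2 * |γ| * (a i)) + β * T := by
    nlinarith [habs, hγfact, hsp, hα]
  have h4 : Sm ≤ (|α - 2*γ*(a i) + β * (Sm + Sp)| + (α + 2 * |γ| * (a i)) + β * T) / β := by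
    rw [le_div_iff₀ hβ]
    nlinarith [h3]
  have h5 : (|α - 2*γ*(a i) + β * (Sm + Sp)| + (α + 2 * |γ| * (a i)) + β * T) / β
      = |α - 2*γ*(a i) + β * (Sm + Sp)| / β + (α + 2 * |γ| * (a i)) / β + T := by
    field_simp
  linarith [h1, h4, h5.le, h5.ge]

/-- The termwise conclusion from the proof of Lemma 3.2 of the paper:
integrability of the full drift of the eigenvalue SDE along a continuous
ordered trajectory implies integrability of each pairwise interaction
term `f^i / (f^i - f^l)` for `l < i`. -/
theorem stmt_1 (n : ℕ) (hn : 2 ≤ n) (α β γ : ℝ) (hα : 0 ≤ α) (hβ : 0 < β)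
    (f : ℝ → Fin n → ℝ)
    (hcont : ContinuousOn f (Set.Ici 0))
    (hord : ∀ t ∈ Set.Ici (0:ℝ), 0 ≤ f t ⟨0, by omega⟩ ∧ Monotone (f t))
    (hstrict : ∀ᵐ t ∂(volume.restrict (Set.Ici (0:ℝ))),
      0 ≤ f t ⟨0, by omega⟩ ∧ StrictMono (f t))
    (hdrift : ∀ i : Fin n, ∀ t : ℝ, 0 ≤ t →
      (∫⁻ s in Set.Ioc (0:ℝ) t,
        ENNReal.ofReal
          |α - 2*γ*(f s i) + β * ∑ j ∈ Finset.univ.erase i,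
              (f s i + f s j) / (f s i - f s j)|) < ⊤) :
    ∀ l i : Fin n, l < i → ∀ t : ℝ, 0 ≤ t →
      (∫⁻ s in Set.Ioc (0:ℝ) t,
        ENNReal.ofReal (f s i / (f s i - f s l))) < ⊤ := by
  have key : ∀ k : ℕ, ∀ i : Fin n, n - (i : ℕ) ≤ k → ∀ l : Fin n, l < i → ∀ t : ℝ, 0 ≤ t →
      (∫⁻ s in Set.Ioc (0:ℝ) t,
        ENNReal.ofReal (f s i / (f s i - f s l))) < ⊤ := by
    intro k
    induction k with
    | zero =>
      intro i hi
      exact absurd hi (by have := i.isLt; omega)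
    | succ k ih =>
      intro i hi l hli t ht
      have hsub : Set.Ioc (0:ℝ) t ⊆ Set.Ici 0 := fun x hx => le_of_lt hx.1
      have hres : volume.restrict (Set.Ioc (0:ℝ) t) ≤ volume.restrict (Set.Ici (0:ℝ)) :=
        Measure.restrict_mono hsub le_rfl
      have hmeas : ∀ j : Fin n,
          AEMeasurable (fun s => f s j) (volume.restrict (Set.Ioc (0:ℝ) t)) := by
        intro j
        have hc : ContinuousOn (fun s => f s j) (Set.Ici (0:ℝ)) :=
          (continuous_apply j).comp_continuousOn hcont
        exact (hc.aemeasurable measurableSet_Ici).mono_measure hres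
      have hae : ∀ᵐ s ∂(volume.restrict (Set.Ioc (0:ℝ) t)),
          0 ≤ f s ⟨0, by omega⟩ ∧ StrictMono (f s) :=
        hstrict.filter_mono (ae_mono hres)
      -- bound on f on the compact interval
      obtain ⟨C, hC⟩ : ∃ C, ∀ x ∈ Set.Icc (0:ℝ) t, ‖f x i‖ ≤ C :=
        (isCompact_Icc).exists_bound_of_continuousOn
          ((continuous_apply i).comp_continuousOn (hcont.mono Set.Icc_subset_Ici_self))
      -- abbreviations
      set μt := volume.restrict (Set.Ioc (0:ℝ) t) with hμt
      let D : ℝ → ℝ := fun s => α - 2*γ*(f s i) + β * ∑ j ∈ Finset.univ.erase i,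
        (f s i + f s j) / (f s i - f s j)
      let F1 : ℝ → ENNReal := fun s => ENNReal.ofReal (|D s| / β)
      let F2 : ℝ → ENNReal := fun s => ENNReal.ofReal ((α + 2 * |γ| * (f s i)) / β)
      let F3 : ℝ → ENNReal := fun s => ∑ j ∈ Finset.univ.filter (fun j => i < j),
        ENNReal.ofReal (2*(f s j / (f s j - f s i)))
      -- measurability
      have hD : AEMeasurable D μt := by
        apply AEMeasurable.add
        · exact aemeasurable_const.sub ((hmeas i).const_mul (2*γ))
        · exact (Finset.aemeasurable_fun_sum _ (fun j _ =>
            ((hmeas i).add (hmeas j)).div ((hmeas i).sub (hmeas j)))).const_mul β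
      have habsD : AEMeasurable (fun s => |D s|) μt := by
        simpa [Real.norm_eq_abs] using hD.norm
      have hF1 : AEMeasurable F1 μt := (habsD.div_const β).ennreal_ofReal
      have hF2 : AEMeasurable F2 μt :=
        ((aemeasurable_const.add ((hmeas i).const_mul (2 * |γ|))).div_const β).ennreal_ofReal
      have hF3j : ∀ j : Fin n, AEMeasurable
          (fun s => ENNReal.ofReal (2*(f s j / (f s j - f s i)))) μt := fun j =>
        (((hmeas j).div ((hmeas j).sub (hmeas i))).const_mul 2).ennreal_ofReal
      have hF3 : AEMeasurable F3 μt := Finset.aemeasurable_fun_sum _ (fun j _ => hF3j j)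
      -- pointwise a.e. bound
      have hptwise : ∀ᵐ s ∂μt,
          ENNReal.ofReal (f s i / (f s i - f s l)) ≤ F1 s + F2 s + F3 s := by
        filter_upwards [hae] with s hs
        have hnn : ∀ j, 0 ≤ f s j := fun j =>
          hs.1.trans (hs.2.monotone (by simp [Fin.le_def]))
        have hreal := aux_ineq i l hli (γ := γ) hα hβ (f s) hnn hs.2
        calc ENNReal.ofReal (f s i / (f s i - f s l))
            ≤ ENNReal.ofReal (|D s| / β + (α + 2 * |γ| * (f s i)) / β
              + ∑ j ∈ Finset.univ.filter (fun j => i < j), 2*(f s j / (f s j - f s i))) :=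
              ENNReal.ofReal_le_ofReal hreal
          _ ≤ ENNReal.ofReal (|D s| / β + (α + 2 * |γ| * (f s i)) / β)
              + ENNReal.ofReal (∑ j ∈ Finset.univ.filter (fun j => i < j),
                  2*(f s j / (f s j - f s i))) := ENNReal.ofReal_add_le
          _ ≤ (ENNReal.ofReal (|D s| / β) + ENNReal.ofReal ((α + 2 * |γ| * (f s i)) / β))
              + ENNReal.ofReal (∑ j ∈ Finset.univ.filter (fun j => i < j),
                  2*(f s j / (f s j - f s i))) := by
              exact add_le_add_left ENNReal.ofReal_add_le _
          _ = F1 s + F2 s + F3 s := by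
              congr 1
              rw [ENNReal.ofReal_sum_of_nonneg]
              intro j hj
              have hij : i < j := (Finset.mem_filter.1 hj).2
              have hd : 0 ≤ f s j - f s i := (sub_pos.2 (hs.2 hij)).le
              exact mul_nonneg (by norm_num) (div_nonneg (hnn j) hd)
      -- finiteness of the three pieces
      have hI1 : ∫⁻ s, F1 s ∂μt < ⊤ := by
        have hdr : ∫⁻ s, ENNReal.ofReal |D s| ∂μt < ⊤ := hdrift i t ht
        have heq : F1 = fun s => ENNReal.ofReal (1/β) * ENNReal.ofReal |D s| := by
          funext s
          rw [← ENNReal.ofReal_mul (by positivity), one_div, inv_mul_eq_div]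
        rw [heq, lintegral_const_mul'' _ habsD.ennreal_ofReal]
        exact ENNReal.mul_lt_top ENNReal.ofReal_lt_top hdr
      have hI2 : ∫⁻ s, F2 s ∂μt < ⊤ := by
        have hb : ∀ᵐ s ∂μt, F2 s ≤ ENNReal.ofReal ((α + 2 * |γ| * C) / β) := by
          filter_upwards [ae_restrict_mem measurableSet_Ioc] with s hs
          apply ENNReal.ofReal_le_ofReal
          have hfs : f s i ≤ C := by
            have := hC s ⟨hs.1.le, hs.2⟩
            rw [Real.norm_eq_abs] at this
            exact (le_abs_self _).trans this
          apply div_le_div_of_nonneg_right _ hβ.le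
          have : 2 * |γ| * (f s i) ≤ 2 * |γ| * C :=
            mul_le_mul_of_nonneg_left hfs (by positivity)
          linarith
        calc ∫⁻ s, F2 s ∂μt ≤ ∫⁻ _, ENNReal.ofReal ((α + 2 * |γ| * C) / β) ∂μt :=
              lintegral_mono_ae hb
          _ = ENNReal.ofReal ((α + 2 * |γ| * C) / β) * volume (Set.Ioc (0:ℝ) t) := by
              rw [hμt, setLIntegral_const]
          _ < ⊤ := ENNReal.mul_lt_top ENNReal.ofReal_lt_top
              (by rw [Real.volume_Ioc]; exact ENNReal.ofReal_lt_top)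
      have hI3 : ∫⁻ s, F3 s ∂μt < ⊤ := by
        rw [show (fun s => F3 s) = F3 from rfl]
        rw [show (∫⁻ s, F3 s ∂μt) = ∑ j ∈ Finset.univ.filter (fun j => i < j),
            ∫⁻ s, ENNReal.ofReal (2*(f s j / (f s j - f s i))) ∂μt from
          lintegral_finset_sum' _ (fun j _ => hF3j j)]
        refine ENNReal.sum_lt_top.2 (fun j hj => ?_)
        have hij : i < j := (Finset.mem_filter.1 hj).2
        have heq : (fun s => ENNReal.ofReal (2*(f s j / (f s j - f s i))))
            = fun s => ENNReal.ofReal 2 * ENNReal.ofReal (f s j / (f s j - f s i)) := by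
          funext s
          rw [← ENNReal.ofReal_mul (by norm_num)]
        rw [heq, lintegral_const_mul'' _ (show AEMeasurable (fun s => ENNReal.ofReal (f s j / (f s j - f s i))) μt from ((hmeas j).div ((hmeas j).sub (hmeas i))).ennreal_ofReal)]
        have hjk : n - (j : ℕ) ≤ k := by
          have h1 := j.isLt
          have h2 : (i : ℕ) < (j : ℕ) := hij
          omega
        exact ENNReal.mul_lt_top ENNReal.ofReal_lt_top (ih j hjk i hij t ht)
      -- combine
      calc (∫⁻ s, ENNReal.ofReal (f s i / (f s i - f s l)) ∂μt)
          ≤ ∫⁻ s, (F1 s + F2 s + F3 s) ∂μt := lintegral_mono_ae hptwise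
        _ = (∫⁻ s, (F1 s + F2 s) ∂μt) + ∫⁻ s, F3 s ∂μt :=
            lintegral_add_right' _ hF3
        _ = ((∫⁻ s, F1 s ∂μt) + ∫⁻ s, F2 s ∂μt) + ∫⁻ s, F3 s ∂μt := by
            rw [lintegral_add_right' _ hF2]
        _ < ⊤ := by
            exact ENNReal.add_lt_top.2 ⟨ENNReal.add_lt_top.2 ⟨hI1, hI2⟩, hI3⟩
  intro l i hli t ht
  exact key n i (by omega) l hli t ht
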